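/- arXiv:2409.10295 — 2 statements merged into one kernel-verified Lean document; each statement's English description precedes it below -/
import Mathlib

section
/- Let Θ ⊆ [θ̲, θ̄] and let F̄ be the affine approximation of the folding operator given by F̄_{ij}(θ) = (z_{ij} − z_{i,j−1}) · (θ_i − θ̲_i)/(θ̄_i − θ̲_i). Then F̄(Θ) is contained in the outer approximation Ψ'⋄ = {ψ' : F⁺(ψ') ∈ Θ} ∩ conv(F([θ̲, θ̄])). -/
/-- The folding operator. -/
noncomputable def fold (I : ℕ) (J : Fin I → ℕ) (z : (i : Fin I) → ℕ → ℝ)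
    (θ : Fin I → ℝ) : (i : Fin I) → Fin (J i) → ℝ :=
  fun i j => min (max (θ i - z i j.val) 0) (z i (j.val + 1) - z i j.val)

/-- The affine approximation `F̄` of the folding operator. -/
noncomputable def foldbar (I : ℕ) (J : Fin I → ℕ) (z : (i : Fin I) → ℕ → ℝ)
    (θ : Fin I → ℝ) : (i : Fin I) → Fin (J i) → ℝ :=
  fun i j => (z i (j.val + 1) - z i j.val) * (θ i - z i 0) / (z i (J i) - z i 0)

/-- The retraction `F⁺`. -/
noncomputable def retr (I : ℕ) (J : Fin I → ℕ) (z : (i : Fin I) → ℕ → ℝ)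
    (ψ : (i : Fin I) → Fin (J i) → ℝ) : Fin I → ℝ :=
  fun i => z i 0 + ∑ j, ψ i j

lemma zmono (I : ℕ) (J : Fin I → ℕ) (z : (i : Fin I) → ℕ → ℝ)
    (hz : ∀ i, ∀ j, j < J i → z i j < z i (j + 1)) (i : Fin I) :
    ∀ a b : ℕ, a ≤ b → b ≤ J i → z i a ≤ z i b := by
  intro a b hab hb
  induction b with
  | zero => simp [Nat.le_zero.mp hab]
  | succ n ih =>
    rcases Nat.lt_or_ge a (n+1) with h | h
    · exact le_trans (ih (Nat.lt_succ_iff.mp h) (le_trans (Nat.le_succ n) hb))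
        (le_of_lt (hz i n hb))
    · have : a = n + 1 := le_antisymm hab h
      simp [this]

theorem stmt_6 (I : ℕ) (J : Fin I → ℕ) (hJ : ∀ i, 1 ≤ J i)
    (z : (i : Fin I) → ℕ → ℝ)
    (hz : ∀ i, ∀ j, j < J i → z i j < z i (j + 1))
    (Θ : Set (Fin I → ℝ))
    (hΘ : Θ ⊆ Set.Icc (fun i => z i 0) (fun i => z i (J i))) :
    foldbar I J z '' Θ ⊆
      {ψ : (i : Fin I) → Fin (J i) → ℝ | retr I J z ψ ∈ Θ} ∩
        convexHull ℝ (fold I J z '' Set.Icc (fun i => z i 0) (fun i => z i (J i))) := by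
  rintro ψ ⟨θ, hθ, rfl⟩
  have hzlt : ∀ i : Fin I, z i 0 < z i (J i) := fun i =>
    lt_of_lt_of_le (hz i 0 (hJ i)) (zmono I J z hz i 1 (J i) (hJ i) le_rfl)
  have hzne : ∀ i : Fin I, z i (J i) - z i 0 ≠ 0 := fun i => sub_ne_zero.mpr (hzlt i).ne'
  have hθmem := hΘ hθ
  obtain ⟨hlo, hhi⟩ := hθmem
  constructor
  · -- retraction recovers θ
    have : retr I J z (foldbar I J z θ) = θ := by
      funext i
      have htel : ∑ j : Fin (J i), (z i (j.val + 1) - z i j.val) = z i (J i) - z i 0 := by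
        rw [Fin.sum_univ_eq_sum_range (fun j => z i (j + 1) - z i j)]
        exact Finset.sum_range_sub (fun j => z i j) (J i)
      have : ∑ j : Fin (J i), foldbar I J z θ i j = θ i - z i 0 := by
        simp only [foldbar, div_eq_mul_inv]
        rw [← Finset.sum_mul, ← Finset.sum_mul, htel]
        rw [mul_comm, inv_mul_cancel_left₀ (hzne i)]
      simp [retr, this]
    rw [Set.mem_setOf_eq, this]
    exact hθ
  · -- convex hull membership
    -- the per-coordinate folding map
    set f : (i : Fin I) → ℝ → Fin (J i) → ℝ :=
      fun i x j => min (max (x - z i j.val) 0) (z i (j.val + 1) - z i j.val) with hf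
    set T : (i : Fin I) → Set (Fin (J i) → ℝ) :=
      fun i => f i '' Set.Icc (z i 0) (z i (J i)) with hT
    have hpi : Set.pi Set.univ T ⊆
        fold I J z '' Set.Icc (fun i => z i 0) (fun i => z i (J i)) := by
      intro x hx
      choose c hc hcx using fun i => hx i (Set.mem_univ i)
      exact ⟨c, ⟨fun i => (hc i).1, fun i => (hc i).2⟩, by
        funext i; exact hcx i⟩
    refine convexHull_mono hpi (mem_convexHull_pi fun i _ => ?_)
    -- per coordinate: segment between f i (z i 0) and f i (z i (J i))
    have ha : f i (z i 0) ∈ T i := ⟨z i 0, ⟨le_rfl, (hzlt i).le⟩, rfl⟩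
    have hb : f i (z i (J i)) ∈ T i := ⟨z i (J i), ⟨(hzlt i).le, le_rfl⟩, rfl⟩
    have hseg := segment_subset_convexHull (𝕜 := ℝ) ha hb
    set t : ℝ := (θ i - z i 0) / (z i (J i) - z i 0) with ht
    have ht0 : 0 ≤ t := div_nonneg (sub_nonneg.mpr (hlo i)) (sub_nonneg.mpr (hzlt i).le)
    have ht1 : t ≤ 1 := by
      rw [ht, div_le_one (sub_pos.mpr (hzlt i))]
      exact sub_le_sub_right (hhi i) _
    apply hseg
    refine ⟨1 - t, t, by linarith, ht0, by ring, ?_⟩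
    funext j
    have hj1 : j.val + 1 ≤ J i := j.isLt
    have hincr : 0 ≤ z i (j.val + 1) - z i j.val :=
      sub_nonneg.mpr (hz i j.val j.isLt).le
    have hja : f i (z i 0) j = 0 := by
      have h1 : z i 0 ≤ z i j.val :=
        zmono I J z hz i 0 j.val (Nat.zero_le _) (le_of_lt j.isLt)
      simp [hf, max_eq_right (sub_nonpos.mpr h1), min_eq_left hincr]
    have hjb : f i (z i (J i)) j = z i (j.val + 1) - z i j.val := by
      have h1 : z i (j.val + 1) ≤ z i (J i) := zmono I J z hz i _ _ hj1 le_rfl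
      simp only [hf]
      rw [max_eq_left (by linarith), min_eq_right (by linarith)]
    simp only [Pi.add_apply, Pi.smul_apply, hja, hjb, smul_eq_mul, mul_zero,
      zero_add, foldbar, ht]
    ring
end

section
/- Assume the uniform symmetric grid and let Θ ⊆ [θ̲, θ̄] be nonempty, compact and signed-permutation invariant, and let ψ̌ satisfy 0 ≤ ψ̌_{ij} ≤ z_j − z_{j−1} for all i ∈ [I], j ∈ [J]. Then the separation problem max over grid rectangles [z⁻,z⁺] of d'(ψ̌, [z⁻,z⁺]) − d̄(Θ, [z⁻,z⁺]) admits a maximizer [z⁻,z⁺] with z⁻ ≤ 0 ≤ z⁺ componentwise. -/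
/-- `Θ` is invariant under signed permutations of the coordinates. -/
def SignedPermInvariant (I : ℕ) (Θ : Set (Fin I → ℝ)) : Prop :=
  ∀ (σ : Equiv.Perm (Fin I)) (ε : Fin I → ℝ), (∀ i, ε i = 1 ∨ ε i = -1) →
    ∀ θ ∈ Θ, (fun i => ε i * θ (σ i)) ∈ Θ

/-- ℓ1-distance from a point to the box `[zm, zp]`. -/
noncomputable def l1dist (I : ℕ) (θ zm zp : Fin I → ℝ) : ℝ :=
  sInf ((fun θ' => ∑ i, |θ i - θ' i|) '' Set.Icc zm zp)

/-- Maximal ℓ1-distance from `Θ` to the box `[zm, zp]`. -/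
noncomputable def dbar (I : ℕ) (Θ : Set (Fin I → ℝ)) (zm zp : Fin I → ℝ) : ℝ :=
  sSup ((fun θ => l1dist I θ zm zp) '' Θ)

/-- The linear distance `d'(ψ̌, [z⁻, z⁺])` for the uniform grid. -/
noncomputable def dlinU (I J : ℕ) (z : ℕ → ℝ) (ψ : Fin I → Fin J → ℝ)
    (zm zp : Fin I → ℝ) : ℝ :=
  ∑ i, ((∑ j ∈ Finset.univ.filter (fun j : Fin J => zp i < z (j.val + 1)), ψ i j)
    + zm i - z 0
    - ∑ j ∈ Finset.univ.filter (fun j : Fin J => z (j.val + 1) ≤ zm i), ψ i j)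

/-- `[zm, zp]` is a grid rectangle for the uniform grid. -/
def GridRectU (I J : ℕ) (z : ℕ → ℝ) (zm zp : Fin I → ℝ) : Prop :=
  zm ≤ zp ∧ (∀ i, ∃ k ≤ J, zm i = z k) ∧ (∀ i, ∃ k ≤ J, zp i = z k)


open Finset

/-- distance from point t to interval [a,b] -/
noncomputable def gdist (a b t : ℝ) : ℝ := max (a - t) (max (t - b) 0)

noncomputable def Dsum (I : ℕ) (a b θ : Fin I → ℝ) : ℝ := ∑ i, gdist (a i) (b i) (θ i)

lemma gdist_nonneg (a b t : ℝ) : 0 ≤ gdist a b t := le_max_of_le_right (le_max_right _ _)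

lemma abs_proj (a b t : ℝ) (hab : a ≤ b) :
    |t - max a (min t b)| = gdist a b t := by
  unfold gdist
  rcases le_total t a with h1 | h1
  · have hmin : min t b = t := min_eq_left (h1.trans hab)
    rw [hmin, max_eq_left h1, abs_of_nonpos (by linarith)]
    have h2 : t - b ≤ 0 := by linarith
    rw [max_eq_right h2, max_eq_left (by linarith)]
    ring
  · rcases le_total t b with h2 | h2
    · have hmin : min t b = t := min_eq_left h2
      rw [hmin, max_eq_right h1]
      simp only [sub_self, abs_zero]
      rw [max_eq_right (by linarith : t - b ≤ (0:ℝ)), max_eq_right (by linarith : a - t ≤ (0:ℝ))]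
    · have hmin : min t b = b := min_eq_right h2
      rw [hmin, max_eq_right hab, abs_of_nonneg (by linarith)]
      rw [max_eq_left (by linarith : t - b ≥ 0), max_eq_right (by linarith)]

lemma gdist_le_abs_sub (a b t t' : ℝ) (h1 : a ≤ t') (h2 : t' ≤ b) :
    gdist a b t ≤ |t - t'| := by
  unfold gdist
  apply max_le
  · have : a - t ≤ t' - t := by linarith
    calc a - t ≤ t' - t := this
      _ ≤ |t' - t| := le_abs_self _
      _ = |t - t'| := abs_sub_comm _ _
  · apply max_le
    · have : t - b ≤ t - t' := by linarith
      exact this.trans (le_abs_self _)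
    · exact abs_nonneg _

lemma l1dist_eq_Dsum (I : ℕ) (θ a b : Fin I → ℝ) (hab : a ≤ b) :
    l1dist I θ a b = Dsum I a b θ := by
  unfold l1dist Dsum
  apply le_antisymm
  · apply csInf_le
    · exact ⟨0, by rintro x ⟨θ', _, rfl⟩; positivity⟩
    · refine ⟨fun i => max (a i) (min (θ i) (b i)), ⟨fun i => le_max_left _ _,
        fun i => max_le (hab i) (min_le_right _ _)⟩, ?_⟩
      exact Finset.sum_congr rfl fun i _ => abs_proj _ _ _ (hab i)
  · apply le_csInf
    · exact ⟨_, ⟨a, ⟨le_refl a, hab⟩, rfl⟩⟩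
    · rintro x ⟨θ', hθ', rfl⟩
      exact Finset.sum_le_sum fun i _ => gdist_le_abs_sub _ _ _ _ (hθ'.1 i) (hθ'.2 i)

lemma dbar_eq_sSup (I : ℕ) (Θ : Set (Fin I → ℝ)) (a b : Fin I → ℝ) (hab : a ≤ b) :
    dbar I Θ a b = sSup (Dsum I a b '' Θ) := by
  unfold dbar
  congr 1
  exact Set.image_congr fun θ _ => l1dist_eq_Dsum I θ a b hab

lemma continuous_Dsum (I : ℕ) (a b : Fin I → ℝ) : Continuous (Dsum I a b) := by
  apply continuous_finset_sum
  intro i _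
  exact ((continuous_const.sub (continuous_apply i)).max
    (((continuous_apply i).sub continuous_const).max continuous_const))

lemma le_dbar (I : ℕ) (Θ : Set (Fin I → ℝ)) (a b θ : Fin I → ℝ) (hab : a ≤ b)
    (hcomp : IsCompact Θ) (hθ : θ ∈ Θ) : Dsum I a b θ ≤ dbar I Θ a b := by
  rw [dbar_eq_sSup I Θ a b hab]
  exact le_csSup ((hcomp.image (continuous_Dsum I a b)).bddAbove) ⟨θ, hθ, rfl⟩

lemma dbar_attained (I : ℕ) (Θ : Set (Fin I → ℝ)) (a b : Fin I → ℝ) (hab : a ≤ b)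
    (hne : Θ.Nonempty) (hcomp : IsCompact Θ) :
    ∃ θ ∈ Θ, dbar I Θ a b = Dsum I a b θ := by
  obtain ⟨θ, hθ, hmax⟩ := hcomp.exists_isMaxOn hne (continuous_Dsum I a b).continuousOn
  refine ⟨θ, hθ, le_antisymm ?_ (le_dbar I Θ a b θ hab hcomp hθ)⟩
  rw [dbar_eq_sSup I Θ a b hab]
  exact csSup_le ⟨Dsum I a b θ, θ, hθ, rfl⟩ (by rintro x ⟨φ, hφ, rfl⟩; exact hmax hφ)
lemma gdist_neg_abs (a b t : ℝ) (ha : 0 < a) (hab : a ≤ b) : gdist a b (-|t|) = a + |t| := by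
  have h0 := abs_nonneg t
  unfold gdist
  rw [max_eq_right (by linarith : -|t| - b ≤ 0), max_eq_left (by linarith : 0 ≤ a - -|t|)]
  ring

lemma gdist_zero_left_le (b t : ℝ) (hb : 0 ≤ b) : gdist 0 b t ≤ |t| := by
  unfold gdist
  refine max_le (by simpa using neg_le_abs t) (max_le ?_ (abs_nonneg t))
  linarith [le_abs_self t]

lemma gdist_pos_abs (a b t : ℝ) (hb : b < 0) (hab : a ≤ b) : gdist a b |t| = |t| - b := by
  have h0 := abs_nonneg t
  unfold gdist
  rw [max_eq_left (by linarith : (0:ℝ) ≤ |t| - b), max_eq_right (by linarith : a - |t| ≤ |t| - b)]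

lemma gdist_zero_right_le (a t : ℝ) (ha : a ≤ 0) : gdist a 0 t ≤ |t| := by
  unfold gdist
  refine max_le (by linarith [neg_le_abs t]) (max_le (by simpa using le_abs_self t) (abs_nonneg t))

lemma Dsum_sub (I : ℕ) (a b a' b' θ θ' : Fin I → ℝ) (i0 : Fin I)
    (h : ∀ i, i ≠ i0 → gdist (a i) (b i) (θ i) = gdist (a' i) (b' i) (θ' i)) :
    Dsum I a b θ - Dsum I a' b' θ' =
      gdist (a i0) (b i0) (θ i0) - gdist (a' i0) (b' i0) (θ' i0) := by
  unfold Dsum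
  rw [← Finset.sum_sub_distrib]
  exact Finset.sum_eq_single_of_mem i0 (Finset.mem_univ _)
    (fun i _ hi => by rw [h i hi]; ring)

noncomputable def Tlin (J : ℕ) (z : ℕ → ℝ) (ψi : Fin J → ℝ) (am bm : ℝ) : ℝ :=
  (∑ j ∈ Finset.univ.filter (fun j : Fin J => bm < z (j.val + 1)), ψi j)
    + am - z 0
    - ∑ j ∈ Finset.univ.filter (fun j : Fin J => z (j.val + 1) ≤ am), ψi j

lemma dlinU_eq_sum (I J : ℕ) (z : ℕ → ℝ) (ψ : Fin I → Fin J → ℝ) (a b : Fin I → ℝ) :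
    dlinU I J z ψ a b = ∑ i, Tlin J z (ψ i) (a i) (b i) := rfl

lemma dlinU_sub (I J : ℕ) (z : ℕ → ℝ) (ψ : Fin I → Fin J → ℝ)
    (a b a' b' : Fin I → ℝ) (i0 : Fin I) (h : ∀ i, i ≠ i0 → a i = a' i ∧ b i = b' i) :
    dlinU I J z ψ a b - dlinU I J z ψ a' b' =
      Tlin J z (ψ i0) (a i0) (b i0) - Tlin J z (ψ i0) (a' i0) (b' i0) := by
  rw [dlinU_eq_sum, dlinU_eq_sum, ← Finset.sum_sub_distrib]
  exact Finset.sum_eq_single_of_mem i0 (Finset.mem_univ _)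
    (fun i _ hi => by rw [(h i hi).1, (h i hi).2]; ring)

lemma z_mono (J : ℕ) (z : ℕ → ℝ) (hz : ∀ j < J, z j < z (j + 1)) :
    ∀ m n, m ≤ n → n ≤ J → z m ≤ z n := by
  intro m n hmn hn
  induction n with
  | zero => simp [Nat.le_zero.mp hmn]
  | succ n ih =>
    rcases Nat.lt_or_ge m (n + 1) with h | h
    · have h1 := ih (by omega) (by omega)
      have h2 := hz n (by omega)
      linarith
    · have : m = n + 1 := by omega
      simp [this]

lemma z_smono (J : ℕ) (z : ℕ → ℝ) (hz : ∀ j < J, z j < z (j + 1)) :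
    ∀ m n, m < n → n ≤ J → z m < z n := by
  intro m n hmn hn
  have h1 := hz m (by omega)
  have h2 := z_mono J z hz (m + 1) n (by omega) hn
  linarith

lemma step1 (I J : ℕ) (z : ℕ → ℝ) (ψ : Fin I → Fin J → ℝ) (hψ0 : ∀ i j, 0 ≤ ψ i j)
    (Θ : Set (Fin I → ℝ)) (hne : Θ.Nonempty) (hcomp : IsCompact Θ)
    (hSPI : SignedPermInvariant I Θ)
    (a b : Fin I → ℝ) (hab : a ≤ b) (i0 : Fin I) (hpos : 0 < a i0) :
    dlinU I J z ψ a b - dbar I Θ a b ≤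
      dlinU I J z ψ (Function.update a i0 0) b
        - dbar I Θ (Function.update a i0 0) b := by
  classical
  set a' := Function.update a i0 0 with ha'def
  have ha'i0 : a' i0 = 0 := Function.update_self i0 0 a
  have ha'ne : ∀ i, i ≠ i0 → a' i = a i := fun i hi => Function.update_of_ne hi 0 a
  have hbi0 : 0 < b i0 := lt_of_lt_of_le hpos (hab i0)
  have ha'b : a' ≤ b := by
    intro i
    by_cases hi : i = i0
    · subst hi; rw [ha'i0]; linarith
    · rw [ha'ne i hi]; exact hab i
  -- dlin side
  have hdlin : dlinU I J z ψ a b - dlinU I J z ψ a' b ≤ a i0 := by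
    rw [dlinU_sub I J z ψ a b a' b i0 (fun i hi => ⟨(ha'ne i hi).symm, rfl⟩), ha'i0]
    have hsub : Finset.univ.filter (fun j : Fin J => z (j.val + 1) ≤ 0) ⊆
        Finset.univ.filter (fun j : Fin J => z (j.val + 1) ≤ a i0) := by
      intro j hj
      simp only [Finset.mem_filter, Finset.mem_univ, true_and] at *
      exact le_trans hj hpos.le
    have hle := Finset.sum_le_sum_of_subset_of_nonneg hsub
      (fun j _ _ => hψ0 i0 j)
    unfold Tlin
    set S0 := ∑ j ∈ Finset.univ.filter (fun j : Fin J => z (j.val + 1) ≤ 0), ψ i0 j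
    set SA := ∑ j ∈ Finset.univ.filter (fun j : Fin J => z (j.val + 1) ≤ a i0), ψ i0 j
    ring_nf
    linarith
  -- dbar side
  have hdbar : dbar I Θ a' b + a i0 ≤ dbar I Θ a b := by
    obtain ⟨θ, hθ, hθeq⟩ := dbar_attained I Θ a' b ha'b hne hcomp
    set ε : Fin I → ℝ := fun i => if i = i0 then (if 0 ≤ θ i0 then (-1 : ℝ) else 1) else 1
      with hεdef
    have hε : ∀ i, ε i = 1 ∨ ε i = -1 := by
      intro i
      by_cases hi : i = i0
      · by_cases h0 : 0 ≤ θ i0 <;> simp [hεdef, hi, h0]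
      · simp [hεdef, hi]
    have hmem := hSPI (Equiv.refl (Fin I)) ε hε θ hθ
    set θ'' : Fin I → ℝ := fun i => ε i * θ i with hθ''def
    have hmem' : θ'' ∈ Θ := by
      have : (fun i => ε i * θ ((Equiv.refl (Fin I)) i)) = θ'' := by funext i; rfl
      rwa [this] at hmem
    have hθ''i0 : θ'' i0 = -|θ i0| := by
      have hev : ε i0 = if 0 ≤ θ i0 then (-1 : ℝ) else 1 := by simp [hεdef]
      show ε i0 * θ i0 = -|θ i0|
      rw [hev]
      by_cases h0 : 0 ≤ θ i0
      · simp [h0, abs_of_nonneg h0]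
      · simp [h0, abs_of_neg (lt_of_not_ge h0)]
    have hθ''ne : ∀ i, i ≠ i0 → θ'' i = θ i := by
      intro i hi; simp [hθ''def, hεdef, hi]
    have hD : Dsum I a b θ'' - Dsum I a' b θ =
        gdist (a i0) (b i0) (θ'' i0) - gdist (a' i0) (b i0) (θ i0) :=
      Dsum_sub I a b a' b θ'' θ i0
        (fun i hi => by rw [hθ''ne i hi, ha'ne i hi])
    have h1 : gdist (a i0) (b i0) (θ'' i0) = a i0 + |θ i0| := by
      rw [hθ''i0]; exact gdist_neg_abs _ _ _ hpos (hab i0)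
    have h2 : gdist (a' i0) (b i0) (θ i0) ≤ |θ i0| := by
      rw [ha'i0]; exact gdist_zero_left_le _ _ hbi0.le
    have h3 : Dsum I a b θ'' ≤ dbar I Θ a b := le_dbar I Θ a b θ'' hab hcomp hmem'
    linarith
  linarith
lemma telescope_psi (J : ℕ) (z : ℕ → ℝ) (hz : ∀ j < J, z j < z (j + 1))
    (ψi : Fin J → ℝ) (hψi : ∀ j, ψi j ≤ z (j.val + 1) - z j.val)
    (k' kh : ℕ) (hkh : kh ≤ J) (hk'kh : k' ≤ kh) :
    ∑ j ∈ Finset.univ.filter (fun j : Fin J => k' ≤ j.val ∧ j.val < kh), ψi j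
      ≤ z kh - z k' := by
  classical
  have h1 : ∑ j ∈ Finset.univ.filter (fun j : Fin J => k' ≤ j.val ∧ j.val < kh), ψi j
      ≤ ∑ j ∈ Finset.univ.filter (fun j : Fin J => k' ≤ j.val ∧ j.val < kh),
          (z (j.val + 1) - z j.val) :=
      Finset.sum_le_sum (fun j _ => hψi j)
  have h2 : ∑ j ∈ Finset.univ.filter (fun j : Fin J => k' ≤ j.val ∧ j.val < kh),
        (z (j.val + 1) - z j.val)
        = ∑ n ∈ (Finset.range J).filter (fun n => k' ≤ n ∧ n < kh), (z (n + 1) - z n) := by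
    rw [Finset.sum_filter, Finset.sum_filter,
      Fin.sum_univ_eq_sum_range (fun n => if k' ≤ n ∧ n < kh then z (n + 1) - z n else 0)]
  have h3 : (Finset.range J).filter (fun n => k' ≤ n ∧ n < kh) = Finset.Ico k' kh := by
    ext n
    simp only [Finset.mem_filter, Finset.mem_range, Finset.mem_Ico]
    omega
  have h4 : ∑ n ∈ Finset.Ico k' kh, (z (n + 1) - z n) = z kh - z k' := by
    rw [Finset.sum_Ico_eq_sub _ hk'kh, Finset.sum_range_sub, Finset.sum_range_sub]
    ring
  rw [h2, h3, h4] at h1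
  exact h1

lemma step2 (I J : ℕ) (z : ℕ → ℝ) (hz : ∀ j < J, z j < z (j + 1))
    (ψ : Fin I → Fin J → ℝ) (hψ : ∀ i j, 0 ≤ ψ i j ∧ ψ i j ≤ z (j.val + 1) - z j.val)
    (Θ : Set (Fin I → ℝ)) (hne : Θ.Nonempty) (hcomp : IsCompact Θ)
    (hSPI : SignedPermInvariant I Θ)
    (kh : ℕ) (hkh : kh ≤ J) (hzkh : z kh = 0)
    (a b : Fin I → ℝ) (hab : a ≤ b) (i0 : Fin I) (hneg : b i0 < 0)
    (k' : ℕ) (hk' : k' ≤ J) (hbk' : b i0 = z k') :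
    dlinU I J z ψ a b - dbar I Θ a b ≤
      dlinU I J z ψ a (Function.update b i0 0)
        - dbar I Θ a (Function.update b i0 0) := by
  classical
  set b' := Function.update b i0 0 with hb'def
  have hb'i0 : b' i0 = 0 := Function.update_self i0 0 b
  have hb'ne : ∀ i, i ≠ i0 → b' i = b i := fun i hi => Function.update_of_ne hi 0 b
  have hai0 : a i0 < 0 := lt_of_le_of_lt (hab i0) hneg
  have hab' : a ≤ b' := by
    intro i
    by_cases hi : i = i0
    · subst hi; rw [hb'i0]; linarith
    · rw [hb'ne i hi]; exact hab i
  -- dlin side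
  have hdlin : dlinU I J z ψ a b - dlinU I J z ψ a b' ≤ -(b i0) := by
    rw [dlinU_sub I J z ψ a b a b' i0 (fun i hi => ⟨rfl, (hb'ne i hi).symm⟩), hb'i0]
    have hsub : Finset.univ.filter (fun j : Fin J => (0:ℝ) < z (j.val + 1)) ⊆
        Finset.univ.filter (fun j : Fin J => b i0 < z (j.val + 1)) := by
      intro j hj
      simp only [Finset.mem_filter, Finset.mem_univ, true_and] at *
      linarith
    have hsd : ∑ j ∈ (Finset.univ.filter (fun j : Fin J => b i0 < z (j.val + 1)) \
          Finset.univ.filter (fun j : Fin J => (0:ℝ) < z (j.val + 1))), ψ i0 j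
        = (∑ j ∈ Finset.univ.filter (fun j : Fin J => b i0 < z (j.val + 1)), ψ i0 j)
          - ∑ j ∈ Finset.univ.filter (fun j : Fin J => (0:ℝ) < z (j.val + 1)), ψ i0 j :=
      Finset.sum_sdiff_eq_sub hsub
    have hset : (Finset.univ.filter (fun j : Fin J => b i0 < z (j.val + 1)) \
          Finset.univ.filter (fun j : Fin J => (0:ℝ) < z (j.val + 1)))
        = Finset.univ.filter (fun j : Fin J => k' ≤ j.val ∧ j.val < kh) := by
      ext j
      simp only [Finset.mem_sdiff, Finset.mem_filter, Finset.mem_univ, true_and, not_lt]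
      constructor
      · rintro ⟨hgt, hle⟩
        have hjJ : j.val < J := j.isLt
        constructor
        · by_contra hcon
          push_neg at hcon
          have : z (j.val + 1) ≤ z k' := z_mono J z hz _ _ (by omega) hk'
          rw [hbk'] at hgt
          linarith
        · by_contra hcon
          push_neg at hcon
          have hjJ : j.val < J := j.isLt
          have : z kh < z (j.val + 1) := z_smono J z hz _ _ (by omega) (by omega)
          rw [hzkh] at this
          linarith
      · rintro ⟨h1, h2⟩
        have hjJ : j.val < J := j.isLt
        constructor
        · rw [hbk']
          exact z_smono J z hz _ _ (by omega) (by omega)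
        · have : z (j.val + 1) ≤ z kh := z_mono J z hz _ _ (by omega) hkh
          rw [hzkh] at this
          linarith
    have hk'lt : k' < kh := by
      by_contra hcon
      push_neg at hcon
      have : z kh ≤ z k' := z_mono J z hz _ _ hcon hk'
      rw [hzkh, ← hbk'] at this
      linarith
    have htel := telescope_psi J z hz (ψ i0) (fun j => (hψ i0 j).2) k' kh hkh hk'lt.le
    unfold Tlin
    have hfin : (∑ j ∈ Finset.univ.filter (fun j : Fin J => b i0 < z (j.val + 1)), ψ i0 j)
        - ∑ j ∈ Finset.univ.filter (fun j : Fin J => (0:ℝ) < z (j.val + 1)), ψ i0 j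
        ≤ z kh - z k' := by
      rw [← hsd, hset]
      exact htel
    rw [hzkh] at hfin
    set SB := ∑ j ∈ Finset.univ.filter (fun j : Fin J => b i0 < z (j.val + 1)), ψ i0 j
    set S0 := ∑ j ∈ Finset.univ.filter (fun j : Fin J => (0:ℝ) < z (j.val + 1)), ψ i0 j
    ring_nf
    linarith [hfin, hbk']
  -- dbar side
  have hdbar : dbar I Θ a b' + (-(b i0)) ≤ dbar I Θ a b := by
    obtain ⟨θ, hθ, hθeq⟩ := dbar_attained I Θ a b' hab' hne hcomp
    set ε : Fin I → ℝ := fun i => if i = i0 then (if 0 ≤ θ i0 then (1 : ℝ) else -1) else 1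
      with hεdef
    have hε : ∀ i, ε i = 1 ∨ ε i = -1 := by
      intro i
      by_cases hi : i = i0
      · by_cases h0 : 0 ≤ θ i0 <;> simp [hεdef, hi, h0]
      · simp [hεdef, hi]
    have hmem := hSPI (Equiv.refl (Fin I)) ε hε θ hθ
    set θ'' : Fin I → ℝ := fun i => ε i * θ i with hθ''def
    have hmem' : θ'' ∈ Θ := by
      have : (fun i => ε i * θ ((Equiv.refl (Fin I)) i)) = θ'' := by funext i; rfl
      rwa [this] at hmem
    have hθ''i0 : θ'' i0 = |θ i0| := by
      have hev : ε i0 = if 0 ≤ θ i0 then (1 : ℝ) else -1 := by simp [hεdef]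
      show ε i0 * θ i0 = |θ i0|
      rw [hev]
      by_cases h0 : 0 ≤ θ i0
      · simp [h0, abs_of_nonneg h0]
      · simp [h0, abs_of_neg (lt_of_not_ge h0)]
    have hθ''ne : ∀ i, i ≠ i0 → θ'' i = θ i := by
      intro i hi; simp [hθ''def, hεdef, hi]
    have hD : Dsum I a b θ'' - Dsum I a b' θ =
        gdist (a i0) (b i0) (θ'' i0) - gdist (a i0) (b' i0) (θ i0) :=
      Dsum_sub I a b a b' θ'' θ i0
        (fun i hi => by rw [hθ''ne i hi, hb'ne i hi])
    have h1 : gdist (a i0) (b i0) (θ'' i0) = |θ i0| - b i0 := by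
      rw [hθ''i0]; exact gdist_pos_abs _ _ _ hneg (hab i0)
    have h2 : gdist (a i0) (b' i0) (θ i0) ≤ |θ i0| := by
      rw [hb'i0]; exact gdist_zero_right_le _ _ hai0.le
    have h3 : Dsum I a b θ'' ≤ dbar I Θ a b := le_dbar I Θ a b θ'' hab hcomp hmem'
    linarith
  linarith
noncomputable def fixA (I : ℕ) (zm : Fin I → ℝ) (s : Finset (Fin I)) : Fin I → ℝ :=
  fun i => if i ∈ s then min (zm i) 0 else zm i

noncomputable def fixB (I : ℕ) (zp : Fin I → ℝ) (s : Finset (Fin I)) : Fin I → ℝ :=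
  fun i => if i ∈ s then max (zp i) 0 else zp i

lemma fixAB_le (I : ℕ) (zm zp : Fin I → ℝ) (hzmzp : zm ≤ zp) (s : Finset (Fin I)) :
    fixA I zm s ≤ fixB I zp s := by
  intro i
  unfold fixA fixB
  by_cases hi : i ∈ s
  · rw [if_pos hi, if_pos hi]
    exact (min_le_right _ _).trans (le_max_right _ _)
  · rw [if_neg hi, if_neg hi]
    exact hzmzp i

lemma fix_le (I J : ℕ) (z : ℕ → ℝ) (hz : ∀ j < J, z j < z (j + 1))
    (ψ : Fin I → Fin J → ℝ) (hψ : ∀ i j, 0 ≤ ψ i j ∧ ψ i j ≤ z (j.val + 1) - z j.val)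
    (Θ : Set (Fin I → ℝ)) (hne : Θ.Nonempty) (hcomp : IsCompact Θ)
    (hSPI : SignedPermInvariant I Θ)
    (kh : ℕ) (hkh : kh ≤ J) (hzkh : z kh = 0)
    (zm zp : Fin I → ℝ) (hzmzp : zm ≤ zp) (hgp : ∀ i, ∃ k ≤ J, zp i = z k)
    (s : Finset (Fin I)) :
    dlinU I J z ψ zm zp - dbar I Θ zm zp ≤
      dlinU I J z ψ (fixA I zm s) (fixB I zp s)
        - dbar I Θ (fixA I zm s) (fixB I zp s) := by
  classical
  induction s using Finset.induction_on with
  | empty =>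
    have hA : fixA I zm ∅ = zm := funext fun i => if_neg (Finset.notMem_empty i)
    have hB : fixB I zp ∅ = zp := funext fun i => if_neg (Finset.notMem_empty i)
    rw [hA, hB]
  | @insert i0 s hi0 ih =>
    have hAin : fixA I zm (insert i0 s) = Function.update (fixA I zm s) i0 (min (zm i0) 0) := by
      funext i
      by_cases hi : i = i0
      · subst hi
        rw [Function.update_self]
        exact if_pos (Finset.mem_insert_self i s)
      · rw [Function.update_of_ne hi]
        unfold fixA
        simp only [Finset.mem_insert, hi, false_or]
    have hBin : fixB I zp (insert i0 s) = Function.update (fixB I zp s) i0 (max (zp i0) 0) := by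
      funext i
      by_cases hi : i = i0
      · subst hi
        rw [Function.update_self]
        exact if_pos (Finset.mem_insert_self i s)
      · rw [Function.update_of_ne hi]
        unfold fixB
        simp only [Finset.mem_insert, hi, false_or]
    have hAs : fixA I zm s i0 = zm i0 := if_neg hi0
    have hBs : fixB I zp s i0 = zp i0 := if_neg hi0
    by_cases h1 : 0 < zm i0
    · have hbpos : 0 < zp i0 := lt_of_lt_of_le h1 (hzmzp i0)
      have hBeq : fixB I zp (insert i0 s) = fixB I zp s := by
        rw [hBin, max_eq_left hbpos.le, ← hBs, Function.update_eq_self]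
      have hAeq : fixA I zm (insert i0 s) = Function.update (fixA I zm s) i0 0 := by
        rw [hAin, min_eq_right h1.le]
      rw [hAeq, hBeq]
      refine le_trans ih (step1 I J z ψ (fun i j => (hψ i j).1) Θ hne hcomp hSPI
        (fixA I zm s) (fixB I zp s) (fixAB_le I zm zp hzmzp s) i0 ?_)
      rw [hAs]; exact h1
    · by_cases h2 : zp i0 < 0
      · have hmneg : zm i0 < 0 := lt_of_le_of_lt (hzmzp i0) h2
        have hAeq : fixA I zm (insert i0 s) = fixA I zm s := by
          rw [hAin, min_eq_left hmneg.le, ← hAs, Function.update_eq_self]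
        have hBeq : fixB I zp (insert i0 s) = Function.update (fixB I zp s) i0 0 := by
          rw [hBin, max_eq_right h2.le]
        rw [hAeq, hBeq]
        obtain ⟨k', hk', hzk'⟩ := hgp i0
        refine le_trans ih (step2 I J z hz ψ hψ Θ hne hcomp hSPI kh hkh hzkh
          (fixA I zm s) (fixB I zp s) (fixAB_le I zm zp hzmzp s) i0 ?_ k' hk' ?_)
        · rw [hBs]; exact h2
        · rw [hBs]; exact hzk'
      · push_neg at h1 h2
        have hAeq : fixA I zm (insert i0 s) = fixA I zm s := by
          rw [hAin, min_eq_left h1, ← hAs, Function.update_eq_self]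
        have hBeq : fixB I zp (insert i0 s) = fixB I zp s := by
          rw [hBin, max_eq_left h2, ← hBs, Function.update_eq_self]
        rw [hAeq, hBeq]
        exact ih
theorem stmt_12 (I J : ℕ) (hJeven : Even J) (hJpos : 0 < J)
    (z : ℕ → ℝ) (hz : ∀ j < J, z j < z (j + 1))
    (hsym : ∀ j ≤ J, z j = -(z (J - j)))
    (Θ : Set (Fin I → ℝ)) (hne : Θ.Nonempty) (hcomp : IsCompact Θ)
    (hSPI : SignedPermInvariant I Θ)
    (hΘbox : Θ ⊆ Set.Icc (fun _ => z 0) (fun _ => z J))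
    (ψ : Fin I → Fin J → ℝ)
    (hψ : ∀ i j, 0 ≤ ψ i j ∧ ψ i j ≤ z (j.val + 1) - z j.val) :
    ∃ zm zp : Fin I → ℝ, GridRectU I J z zm zp ∧
      (∀ i, zm i ≤ 0 ∧ 0 ≤ zp i) ∧
      ∀ zm' zp' : Fin I → ℝ, GridRectU I J z zm' zp' →
        dlinU I J z ψ zm' zp' - dbar I Θ zm' zp' ≤
          dlinU I J z ψ zm zp - dbar I Θ zm zp := by
  classical
  obtain ⟨h, hh⟩ := hJeven
  have hhJ : h ≤ J := by omega
  have hzh : z h = 0 := by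
    have h1 := hsym h (by omega)
    have h2 : J - h = h := by omega
    rw [h2] at h1
    linarith
  -- maximizer over the finite set of grid rectangles
  set S : Finset ((Fin I → Fin (J + 1)) × (Fin I → Fin (J + 1))) :=
    Finset.univ.filter (fun p => ∀ i, z (p.1 i) ≤ z (p.2 i)) with hS
  have hSne : S.Nonempty := by
    refine ⟨(fun _ => ⟨0, by omega⟩, fun _ => ⟨0, by omega⟩), ?_⟩
    rw [hS, Finset.mem_filter]
    exact ⟨Finset.mem_univ _, fun i => le_refl _⟩
  obtain ⟨p, hpS, hpmax⟩ := S.exists_max_image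
    (fun p => dlinU I J z ψ (fun i => z (p.1 i)) (fun i => z (p.2 i))
      - dbar I Θ (fun i => z (p.1 i)) (fun i => z (p.2 i))) hSne
  set zm : Fin I → ℝ := fun i => z (p.1 i) with hzm
  set zp : Fin I → ℝ := fun i => z (p.2 i) with hzp
  have hzmzp : zm ≤ zp := by
    intro i
    exact (Finset.mem_filter.mp hpS).2 i
  have hgm : ∀ i, ∃ k ≤ J, zm i = z k := fun i => ⟨p.1 i, Fin.is_le _, rfl⟩
  have hgp : ∀ i, ∃ k ≤ J, zp i = z k := fun i => ⟨p.2 i, Fin.is_le _, rfl⟩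
  have hmax : ∀ a b : Fin I → ℝ, GridRectU I J z a b →
      dlinU I J z ψ a b - dbar I Θ a b ≤ dlinU I J z ψ zm zp - dbar I Θ zm zp := by
    rintro a b ⟨hab, hma, hmb⟩
    choose ka hka hzka using hma
    choose kb hkb hzkb using hmb
    set q : (Fin I → Fin (J + 1)) × (Fin I → Fin (J + 1)) :=
      (fun i => ⟨ka i, Nat.lt_succ_of_le (hka i)⟩,
       fun i => ⟨kb i, Nat.lt_succ_of_le (hkb i)⟩) with hq
    have hqa : a = fun i => z (q.1 i) := funext fun i => hzka i
    have hqb : b = fun i => z (q.2 i) := funext fun i => hzkb i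
    have hqS : q ∈ S := by
      rw [hS, Finset.mem_filter]
      refine ⟨Finset.mem_univ _, fun i => ?_⟩
      have : a i ≤ b i := hab i
      rw [hqa, hqb] at this
      exact this
    calc dlinU I J z ψ a b - dbar I Θ a b
        = dlinU I J z ψ (fun i => z (q.1 i)) (fun i => z (q.2 i))
          - dbar I Θ (fun i => z (q.1 i)) (fun i => z (q.2 i)) := by rw [← hqa, ← hqb]
      _ ≤ _ := hpmax q hqS
  refine ⟨fixA I zm Finset.univ, fixB I zp Finset.univ,
    ⟨fixAB_le I zm zp hzmzp _, ?_, ?_⟩, ?_, ?_⟩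
  · intro i
    by_cases h1 : zm i ≤ 0
    · exact ⟨p.1 i, Fin.is_le _, by
        show (if _ then _ else _) = _
        rw [if_pos (Finset.mem_univ i), min_eq_left h1]⟩
    · push_neg at h1
      exact ⟨h, hhJ, by
        show (if _ then _ else _) = _
        rw [if_pos (Finset.mem_univ i), min_eq_right h1.le, hzh]⟩
  · intro i
    by_cases h2 : 0 ≤ zp i
    · exact ⟨p.2 i, Fin.is_le _, by
        show (if _ then _ else _) = _
        rw [if_pos (Finset.mem_univ i), max_eq_left h2]⟩
    · push_neg at h2
      exact ⟨h, hhJ, by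
        show (if _ then _ else _) = _
        rw [if_pos (Finset.mem_univ i), max_eq_right h2.le, hzh]⟩
  · intro i
    constructor
    · show (if _ then _ else _) ≤ (0 : ℝ)
      rw [if_pos (Finset.mem_univ i)]
      exact min_le_right _ _
    · show (0 : ℝ) ≤ (if _ then _ else _)
      rw [if_pos (Finset.mem_univ i)]
      exact le_max_right _ _
  · intro zm' zp' hrect'
    exact le_trans (hmax zm' zp' hrect')
      (fix_le I J z hz ψ hψ Θ hne hcomp hSPI h hhJ hzh zm zp hzmzp hgp Finset.univ)
end
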